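/- Let c ≥ 1 be a real number, let y be a string over an alphabet Σ, let T ≥ 1, and let x = x^1 ∘ x^2 ∘ ⋯ ∘ x^T be a concatenation of strings over Σ. Suppose for each i ∈ {1,…,T}, w_i is a contiguous substring of y and d_i is a real number satisfying ED(x^i, w_i) ≤ d_i ≤ c · min over all contiguous substrings w of y of ED(x^i, w). Let ỹ = w_1 ∘ w_2 ∘ ⋯ ∘ w_T. Then ED(x, y) ≤ ED(y, ỹ) + Σ_{i=1}^T d_i ≤ (2c + 1) · ED(x, y). -/

import Mathlib

open List

namespace Levenshtein

/-- Costs for the Levenshtein distance (as in the former `Mathlib.Data.List.EditDistance.Defs`). -/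
structure Cost (α β δ : Type*) where
  delete : α → δ
  insert : β → δ
  substitute : α → β → δ

/-- The default cost structure: unit costs, free substitution of equal symbols. -/
def defaultCost {α : Type*} [DecidableEq α] : Cost α α ℕ where
  delete _ := 1
  insert _ := 1
  substitute a b := if a = b then 0 else 1

/-- Inner loop of the Levenshtein dynamic program. -/
def impl {α β δ : Type*} [AddZeroClass δ] [Min δ] (C : Cost α β δ) (xs : List α) (y : β)
    (d : {r : List δ // 0 < r.length}) : {r : List δ // 0 < r.length} :=
  let ⟨ds, w⟩ := d
  xs.zipWith (fun x d => (x, d)) (ds.zip ds.tail) |>.foldr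
    (init := ⟨[ds.getLast (List.length_pos_iff.mp w) + C.insert y], by simp⟩)
    (fun ⟨x, d₀, d₁⟩ ⟨r, w⟩ =>
      ⟨min (C.delete x + r[0]) (min (C.insert y + d₀) (C.substitute x y + d₁)) :: r, by simp⟩)

end Levenshtein

/-- Levenshtein distances from every suffix of `xs` to `ys`. -/
def suffixLevenshtein {α β δ : Type*} [AddZeroClass δ] [Min δ] (C : Levenshtein.Cost α β δ)
    (xs : List α) (ys : List β) : {r : List δ // 0 < r.length} :=
  ys.foldr
    (Levenshtein.impl C xs)
    (xs.foldr (init := ⟨[0], by simp⟩) (fun a ⟨ds, w⟩ => ⟨(C.delete a + ds[0]) :: ds, by simp⟩))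

/-- The Levenshtein distance between two lists. -/
def levenshtein {α β δ : Type*} [AddZeroClass δ] [Min δ] (C : Levenshtein.Cost α β δ)
    (xs : List α) (ys : List β) : δ :=
  let ⟨r, w⟩ := suffixLevenshtein C xs ys
  r[0]

/-- Edit distance: minimum number of single-symbol insertions, deletions and
substitutions needed to transform `u` into `v` (Levenshtein distance with unit costs). -/
def ED {α : Type*} [DecidableEq α] (u v : List α) : ℕ :=
  levenshtein Levenshtein.defaultCost u v

namespace LevAux

variable {α β δ : Type*} [AddZeroClass δ] [Min δ] (C : Levenshtein.Cost α β δ)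

theorem lev_cons_nil (x : α) (xs : List α) :
    levenshtein C (x :: xs) ([] : List β) = C.delete x + levenshtein C xs [] := rfl

theorem impl_head (x : α) (xs : List α) (y : β) (d e : δ) (t : List δ) (h) :
    (Levenshtein.impl C (x :: xs) y ⟨d :: e :: t, h⟩).1 =
      min (C.delete x + (Levenshtein.impl C xs y ⟨e :: t, by simp⟩).1[0]'
          (Levenshtein.impl C xs y ⟨e :: t, by simp⟩).2)
        (min (C.insert y + d) (C.substitute x y + e)) ::
        (Levenshtein.impl C xs y ⟨e :: t, by simp⟩).1 := rfl

theorem impl_tail (x : α) (xs : List α) (y : β) (d : δ) (ds : List δ) (h) (w' : 0 < ds.length) :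
    (Levenshtein.impl C (x :: xs) y ⟨d :: ds, h⟩).1.tail = (Levenshtein.impl C xs y ⟨ds, w'⟩).1 := by
  match ds, w' with
  | _ :: _, _ => rfl

theorem sLev_head (xs : List α) (ys : List β) :
    ∃ t, (suffixLevenshtein C xs ys).1 = levenshtein C xs ys :: t := by
  unfold levenshtein
  generalize suffixLevenshtein C xs ys = s
  obtain ⟨l, hl⟩ := s
  cases l with
  | nil => simp at hl
  | cons d t => exact ⟨t, rfl⟩

theorem sLev_tail (x : α) (xs : List α) (ys : List β) :
    (suffixLevenshtein C (x :: xs) ys).1.tail = (suffixLevenshtein C xs ys).1 := by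
  induction ys with
  | nil => rfl
  | cons y ys ih =>
    show (Levenshtein.impl C (x :: xs) y (suffixLevenshtein C (x :: xs) ys)).1.tail =
      (Levenshtein.impl C xs y (suffixLevenshtein C xs ys)).1
    generalize suffixLevenshtein C (x :: xs) ys = s at ih ⊢
    generalize suffixLevenshtein C xs ys = t at ih ⊢
    obtain ⟨l, hl⟩ := s
    obtain ⟨m, hm⟩ := t
    cases l with
    | nil => simp at hl
    | cons d ds =>
      dsimp only [List.tail_cons] at ih
      subst ih
      exact impl_tail C x xs y d ds hl hm

theorem impl_nil_single (y : β) (a : δ) (s : {r : List δ // 0 < r.length}) (h : s.1 = [a]) :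
    (Levenshtein.impl C [] y s).1 = [a + C.insert y] := by
  obtain ⟨l, hl⟩ := s
  dsimp only at h
  subst h
  rfl

theorem sLev_nil (ys : List β) : (suffixLevenshtein C ([] : List α) ys).1 = [levenshtein C [] ys] := by
  induction ys with
  | nil => rfl
  | cons y ys ih =>
    obtain ⟨t, ht⟩ := sLev_head C ([] : List α) (y :: ys)
    have h1 : (suffixLevenshtein C ([] : List α) (y :: ys)).1 = [levenshtein C [] ys + C.insert y] :=
      impl_nil_single C y _ _ ih
    rw [h1] at ht ⊢
    rw [(List.cons.inj ht).1]

theorem lev_nil_cons (y : β) (ys : List β) :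
    levenshtein C ([] : List α) (y :: ys) = levenshtein C [] ys + C.insert y := by
  obtain ⟨t, ht⟩ := sLev_head C ([] : List α) (y :: ys)
  have h1 : (suffixLevenshtein C ([] : List α) (y :: ys)).1 = [levenshtein C [] ys + C.insert y] :=
    impl_nil_single C y _ _ (sLev_nil C ys)
  rw [h1] at ht
  exact (List.cons.inj ht).1.symm

theorem lev_cons_cons (x : α) (xs : List α) (y : β) (ys : List β) :
    levenshtein C (x :: xs) (y :: ys) =
      min (C.delete x + levenshtein C xs (y :: ys))
        (min (C.insert y + levenshtein C (x :: xs) ys) (C.substitute x y + levenshtein C xs ys)) := by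
  obtain ⟨t1, ht1⟩ := sLev_head C (x :: xs) ys
  obtain ⟨t2, ht2⟩ := sLev_head C xs ys
  have htl := sLev_tail C x xs ys
  rw [ht1, List.tail_cons] at htl
  rw [htl] at ht1
  have e1 : levenshtein C (x :: xs) (y :: ys) =
      (Levenshtein.impl C (x :: xs) y (suffixLevenshtein C (x :: xs) ys)).1[0]'
        (Levenshtein.impl C (x :: xs) y (suffixLevenshtein C (x :: xs) ys)).2 := rfl
  have e2 : levenshtein C xs (y :: ys) =
      (Levenshtein.impl C xs y (suffixLevenshtein C xs ys)).1[0]'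
        (Levenshtein.impl C xs y (suffixLevenshtein C xs ys)).2 := rfl
  rw [e1, e2]
  generalize suffixLevenshtein C (x :: xs) ys = S at ht1 ⊢
  generalize suffixLevenshtein C xs ys = S' at ht1 ht2 ⊢
  obtain ⟨l, hl⟩ := S
  obtain ⟨l', hl'⟩ := S'
  dsimp only at ht1 ht2
  subst ht2
  subst ht1
  rfl

end LevAux

namespace EDaux

variable {α : Type*} [DecidableEq α]

@[simp] lemma ED_nil_nil : ED ([] : List α) [] = 0 := rfl

@[simp] lemma ED_nil_cons (y : α) (ys : List α) : ED [] (y :: ys) = 1 + ED [] ys := by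
  rw [ED, ED, LevAux.lev_nil_cons]; exact Nat.add_comm _ _

@[simp] lemma ED_cons_nil (x : α) (xs : List α) : ED (x :: xs) [] = 1 + ED xs [] := by
  rw [ED, ED, LevAux.lev_cons_nil]; rfl

@[simp] lemma ED_cons_cons (x : α) (xs : List α) (y : α) (ys : List α) :
    ED (x :: xs) (y :: ys) =
      min (1 + ED xs (y :: ys))
        (min (1 + ED (x :: xs) ys) ((if x = y then 0 else 1) + ED xs ys)) := by
  simp only [ED]; rw [LevAux.lev_cons_cons]; rfl

lemma ED_del_le (x : α) (xs v : List α) : ED (x :: xs) v ≤ 1 + ED xs v := by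
  cases v <;> simp <;> omega

lemma ED_ins_le (u : List α) (y : α) (ys : List α) : ED u (y :: ys) ≤ 1 + ED u ys := by
  cases u <;> simp <;> omega

lemma ED_sub_le (x : α) (xs : List α) (y : α) (ys : List α) :
    ED (x :: xs) (y :: ys) ≤ (if x = y then 0 else 1) + ED xs ys := by
  simp

/-- Alignments with cost. -/
inductive Al : List α → List α → ℕ → Prop
  | nil : Al [] [] 0
  | del (x : α) {xs ys n} : Al xs ys n → Al (x :: xs) ys (n + 1)
  | ins (y : α) {xs ys n} : Al xs ys n → Al xs (y :: ys) (n + 1)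
  | sub (x y : α) {xs ys n} : Al xs ys n → Al (x :: xs) (y :: ys) (n + if x = y then 0 else 1)

lemma ED_le_of_Al {u v : List α} {n : ℕ} (h : Al u v n) : ED u v ≤ n := by
  induction h with
  | nil => simp
  | del x h ih => calc ED _ _ ≤ 1 + ED _ _ := ED_del_le ..
                  _ ≤ _ := by omega
  | ins y h ih => calc ED _ _ ≤ 1 + ED _ _ := ED_ins_le ..
                  _ ≤ _ := by omega
  | sub x y h ih => calc ED _ _ ≤ (if x = y then 0 else 1) + ED _ _ := ED_sub_le ..
                    _ ≤ _ := by split <;> omega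

lemma Al_ED (u v : List α) : Al u v (ED u v) := by
  induction u generalizing v with
  | nil =>
      induction v with
      | nil => simpa using Al.nil
      | cons y ys ih => rw [ED_nil_cons, Nat.add_comm]; exact Al.ins y ih
  | cons x xs ihu =>
      induction v with
      | nil => rw [ED_cons_nil, Nat.add_comm]; exact Al.del x (ihu [])
      | cons y ys ihv =>
          rw [ED_cons_cons]
          rcases Nat.lt_trichotomy 0 0 with h | h | h
          · omega
          · -- case analysis on which of the three attains the min
            by_cases h1 : min (1 + ED (x :: xs) ys) ((if x = y then 0 else 1) + ED xs ys)
                ≤ 1 + ED xs (y :: ys)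
            · by_cases h2 : (if x = y then 0 else 1) + ED xs ys ≤ 1 + ED (x :: xs) ys
              · rw [min_eq_right, min_eq_right h2, Nat.add_comm]
                · exact Al.sub x y (ihu ys)
                · omega
              · rw [min_eq_right, min_eq_left (by omega), Nat.add_comm]
                · exact Al.ins y ihv
                · omega
            · rw [min_eq_left (by omega), Nat.add_comm]
              exact Al.del x (ihu (y :: ys))
          · omega

lemma Al_symm {u v : List α} {n : ℕ} (h : Al u v n) : Al v u n := by
  induction h with
  | nil => exact Al.nil
  | del x _ ih => exact Al.ins x ih
  | ins y _ ih => exact Al.del y ih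
  | sub x y _ ih =>
      have : (if x = y then 0 else 1) = if y = x then 0 else 1 := by
        by_cases h : x = y <;> simp [h, Ne.symm, eq_comm]
      rw [this]; exact Al.sub y x ih

lemma ED_symm (u v : List α) : ED u v = ED v u :=
  le_antisymm (ED_le_of_Al (Al_symm (Al_ED v u))) (ED_le_of_Al (Al_symm (Al_ED u v)))

end EDaux
namespace EDaux
variable {α : Type*} [DecidableEq α]

lemma scost (x y z : α) : (if x = z then 0 else 1 : ℕ) ≤
    (if x = y then 0 else 1) + (if y = z then 0 else 1) := by
  rcases eq_or_ne x y with rfl | hxy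
  · simp
  · simp only [if_neg hxy]; split <;> omega

lemma Al_comp_aux : ∀ (N : ℕ) (u v w : List α) (m n : ℕ),
    u.length + v.length + w.length = N → Al u v m → Al v w n →
    ∃ k ≤ m + n, Al u w k := by
  intro N
  induction N using Nat.strong_induction_on with
  | _ N IH =>
  intro u v w m n hlen h1 h2
  cases h1 with
  | nil => exact ⟨n, by omega, h2⟩
  | del x h1' =>
      rename_i xs n1
      obtain ⟨k, hk, hal⟩ := IH (xs.length + v.length + w.length)
        (by simp at hlen ⊢; omega) xs v w n1 n rfl h1' h2
      exact ⟨k + 1, by omega, Al.del x hal⟩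
  | ins y h1' =>
      rename_i ys m1
      cases h2 with
      | del _ h2' =>
          rename_i n1
          obtain ⟨k, hk, hal⟩ := IH (u.length + ys.length + w.length)
            (by simp at hlen ⊢; omega) u ys w m1 n1 rfl h1' h2'
          exact ⟨k, by omega, hal⟩
      | ins z h2' =>
          rename_i ws n1
          obtain ⟨k, hk, hal⟩ := IH (u.length + (y :: ys).length + ws.length)
            (by simp at hlen ⊢; omega) u (y :: ys) ws (m1 + 1) n1 rfl
            (Al.ins y h1') h2'
          exact ⟨k + 1, by omega, Al.ins z hal⟩
      | sub _ z h2' =>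
          rename_i ws n1
          obtain ⟨k, hk, hal⟩ := IH (u.length + ys.length + ws.length)
            (by simp at hlen ⊢; omega) u ys ws m1 n1 rfl h1' h2'
          exact ⟨k + 1, by split <;> omega, Al.ins z hal⟩
  | sub x y h1' =>
      rename_i xs ys m1
      cases h2 with
      | del _ h2' =>
          rename_i n1
          obtain ⟨k, hk, hal⟩ := IH (xs.length + ys.length + w.length)
            (by simp at hlen ⊢; omega) xs ys w m1 n1 rfl h1' h2'
          exact ⟨k + 1, by split <;> omega, Al.del x hal⟩
      | ins z h2' =>
          rename_i ws n1
          obtain ⟨k, hk, hal⟩ := IH ((x :: xs).length + (y :: ys).length + ws.length)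
            (by simp at hlen ⊢; omega) (x :: xs) (y :: ys) ws
            (m1 + if x = y then 0 else 1) n1 rfl (Al.sub x y h1') h2'
          exact ⟨k + 1, by omega, Al.ins z hal⟩
      | sub _ z h2' =>
          rename_i ws n1
          obtain ⟨k, hk, hal⟩ := IH (xs.length + ys.length + ws.length)
            (by simp at hlen ⊢; omega) xs ys ws m1 n1 rfl h1' h2'
          refine ⟨k + if x = z then 0 else 1, ?_, Al.sub x z hal⟩
          have := scost x y z
          omega

lemma ED_triangle (u v w : List α) : ED u w ≤ ED u v + ED v w := by
  obtain ⟨k, hk, hal⟩ := Al_comp_aux _ u v w _ _ rfl (Al_ED u v) (Al_ED v w)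
  exact le_trans (ED_le_of_Al hal) hk

end EDaux
namespace EDaux
variable {α : Type*} [DecidableEq α]

lemma Al_append {a b u v : List α} {m n : ℕ} (h1 : Al a u m) (h2 : Al b v n) :
    Al (a ++ b) (u ++ v) (m + n) := by
  induction h1 with
  | nil => simpa using h2
  | del x _ ih => simpa [Nat.add_right_comm] using Al.del x ih
  | ins y _ ih => simpa [Nat.add_right_comm] using Al.ins y ih
  | sub x y _ ih =>
      simpa [Nat.add_right_comm _ n _] using Al.sub x y ih

lemma ED_append (a b u v : List α) : ED (a ++ b) (u ++ v) ≤ ED a u + ED b v :=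
  ED_le_of_Al (Al_append (Al_ED a u) (Al_ED b v))

lemma ED_flatten_le : ∀ (L M : List (List α)), L.length = M.length →
    ED L.flatten M.flatten ≤ (List.zipWith ED L M).sum := by
  intro L
  induction L with
  | nil => intro M hM; simp [(List.length_eq_zero_iff.mp hM.symm)]
  | cons h t ih =>
      intro M hM
      cases M with
      | nil => simp at hM
      | cons m M' =>
          simp only [List.flatten_cons, List.zipWith_cons_cons, List.sum_cons]
          calc ED (h ++ t.flatten) (m ++ M'.flatten)
              ≤ ED h m + ED t.flatten M'.flatten := ED_append ..
            _ ≤ ED h m + (List.zipWith ED t M').sum := by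
                have := ih M' (by simpa using hM)
                omega

lemma Al_split {u y : List α} {n : ℕ} (h : Al u y n) : ∀ a b : List α, u = a ++ b →
    ∃ y1 y2 m k, y = y1 ++ y2 ∧ m + k ≤ n ∧ Al a y1 m ∧ Al b y2 k := by
  induction h with
  | nil =>
      intro a b hab
      obtain ⟨rfl, rfl⟩ := List.append_eq_nil_iff.mp hab.symm
      exact ⟨[], [], 0, 0, rfl, le_refl _, Al.nil, Al.nil⟩
  | del x h ih =>
      rename_i xs ys n0
      intro a b hab
      cases a with
      | nil =>
          refine ⟨[], ys, 0, n0 + 1, rfl, by omega, Al.nil, ?_⟩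
          rw [show b = x :: xs by simpa using hab.symm]
          exact Al.del x h
      | cons x' as =>
          injection hab with h1 h2
          subst h1
          obtain ⟨y1, y2, m, k, hy, hmk, ha, hb⟩ := ih as b h2
          exact ⟨y1, y2, m + 1, k, hy, by omega, Al.del x ha, hb⟩
  | ins y' h ih =>
      intro a b hab
      obtain ⟨y1, y2, m, k, hy, hmk, ha, hb⟩ := ih a b hab
      exact ⟨y' :: y1, y2, m + 1, k, by rw [hy]; rfl, by omega, Al.ins y' ha, hb⟩
  | sub x y' h ih =>
      rename_i xs ys n0
      intro a b hab
      cases a with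
      | nil =>
          refine ⟨[], y' :: ys, 0, n0 + if x = y' then 0 else 1, rfl, by omega, Al.nil, ?_⟩
          rw [show b = x :: xs by simpa using hab.symm]
          exact Al.sub x y' h
      | cons x' as =>
          injection hab with h1 h2
          subst h1
          obtain ⟨y1, y2, m, k, hy, hmk, ha, hb⟩ := ih as b h2
          exact ⟨y' :: y1, y2, m + if x = y' then 0 else 1, k, by rw [hy]; rfl,
            by omega, Al.sub x y' ha, hb⟩

lemma Al_split_many : ∀ (L : List (List α)) (y : List α) (n : ℕ), Al L.flatten y n →
    ∃ Y : List (List α), Y.length = L.length ∧ (∀ l ∈ Y, l <:+: y) ∧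
      (List.zipWith ED L Y).sum ≤ n := by
  intro L
  induction L with
  | nil => intro y n _; exact ⟨[], rfl, by simp, by simp⟩
  | cons h t ih =>
      intro y n hal
      obtain ⟨y1, y2, m, k, hy, hmk, ha, hb⟩ := Al_split hal h t.flatten rfl
      obtain ⟨Y', hlen, hinf, hsum⟩ := ih y2 k hb
      refine ⟨y1 :: Y', by simp [hlen], ?_, ?_⟩
      · intro l hl
        rcases List.mem_cons.mp hl with rfl | hl
        · exact ⟨[], y2, by simp [hy]⟩
        · exact (hinf l hl).trans ⟨y1, [], by simp [hy]⟩
      · have h1 : ED h y1 ≤ m := ED_le_of_Al ha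
        simp only [List.zipWith_cons_cons, List.sum_cons]
        omega

end EDaux
namespace EDaux
variable {α : Type*} [DecidableEq α]

lemma zipWith_ofFn_sum {T : ℕ} (f : Fin T → List α) (Y : List (List α))
    (h : Y.length = T) :
    (List.zipWith ED (List.ofFn f) Y).sum = ∑ i : Fin T, ED (f i) (Y.get (Fin.cast h.symm i)) := by
  rw [← List.sum_ofFn]
  congr 1
  apply List.ext_getElem (by simp [h])
  intro i h1 h2
  simp [List.getElem_zipWith, List.getElem_ofFn, List.get_eq_getElem]

end EDaux


/-- Let `c ≥ 1` be real, `x = x^1 ∘ ⋯ ∘ x^T` (with `T ≥ 1`), and for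
each `i` let `w_i` be a contiguous substring of `y` and `d_i` a real number with
`ED(x^i, w_i) ≤ d_i ≤ c · min_w ED(x^i, w)` (minimum over contiguous substrings `w` of `y`).
With `ỹ = w_1 ∘ ⋯ ∘ w_T` we have `ED(x, y) ≤ ED(y, ỹ) + Σ_i d_i ≤ (2c+1)·ED(x, y)`. -/
theorem stmt5 {α : Type*} [DecidableEq α] (c : ℝ) (hc : 1 ≤ c)
    (T : ℕ) (hT : 1 ≤ T)
    (y : List α) (X : Fin T → List α) (W : Fin T → List α) (d : Fin T → ℝ)
    (hW : ∀ i, W i <:+: y)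
    (hlow : ∀ i, (ED (X i) (W i) : ℝ) ≤ d i)
    (hhigh : ∀ i, d i ≤ c * ((sInf {k : ℕ | ∃ w : List α, w <:+: y ∧ k = ED (X i) w} : ℕ) : ℝ)) :
    (ED (List.ofFn X).flatten y : ℝ) ≤ (ED y (List.ofFn W).flatten : ℝ) + ∑ i : Fin T, d i ∧
    (ED y (List.ofFn W).flatten : ℝ) + ∑ i : Fin T, d i
      ≤ (2 * c + 1) * (ED (List.ofFn X).flatten y : ℝ) := by
  classical
  set x := (List.ofFn X).flatten with hx
  set yt := (List.ofFn W).flatten with hyt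
  -- subadditivity: ED x yt ≤ ∑ ED (X i) (W i)
  have hsub : (ED x yt : ℝ) ≤ ∑ i : Fin T, (ED (X i) (W i) : ℝ) := by
    have h1 : ED x yt ≤ (List.zipWith ED (List.ofFn X) (List.ofFn W)).sum :=
      EDaux.ED_flatten_le _ _ (by simp)
    have h2 := EDaux.zipWith_ofFn_sum X (List.ofFn W) (List.length_ofFn (f := W))
    rw [h2] at h1
    have h3 : ∀ i : Fin T, (List.ofFn W).get (Fin.cast (List.length_ofFn (f := W)).symm i) = W i := by
      intro i; simp
    calc (ED x yt : ℝ) ≤ ((∑ i : Fin T, ED (X i) ((List.ofFn W).get (Fin.cast (List.length_ofFn (f := W)).symm i)) : ℕ) : ℝ) := by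
          exact_mod_cast h1
      _ = ∑ i : Fin T, (ED (X i) (W i) : ℝ) := by
          push_cast
          exact Finset.sum_congr rfl fun i _ => by rw [h3 i]
  have hxyt_d : (ED x yt : ℝ) ≤ ∑ i : Fin T, d i :=
    hsub.trans (Finset.sum_le_sum fun i _ => hlow i)
  -- lower bound: ∑ sInf ≤ ED x y
  have hsinf : (∑ i : Fin T, ((sInf {k : ℕ | ∃ w : List α, w <:+: y ∧ k = ED (X i) w} : ℕ) : ℝ))
      ≤ (ED x y : ℝ) := by
    obtain ⟨Y, hlen, hinf, hsum⟩ := EDaux.Al_split_many (List.ofFn X) y (ED x y)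
      (by rw [hx]; exact EDaux.Al_ED _ y)
    have hlen' : Y.length = T := by simpa using hlen
    have h2 := EDaux.zipWith_ofFn_sum X Y hlen'
    have hpt : ∀ i : Fin T,
        sInf {k : ℕ | ∃ w : List α, w <:+: y ∧ k = ED (X i) w}
          ≤ ED (X i) (Y.get (Fin.cast hlen'.symm i)) := by
      intro i
      apply Nat.sInf_le
      exact ⟨Y.get (Fin.cast hlen'.symm i), hinf _ (Y.get_mem _), rfl⟩
    have : (∑ i : Fin T, sInf {k : ℕ | ∃ w : List α, w <:+: y ∧ k = ED (X i) w})
        ≤ ED x y := by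
      calc _ ≤ ∑ i : Fin T, ED (X i) (Y.get (Fin.cast hlen'.symm i)) :=
            Finset.sum_le_sum fun i _ => hpt i
        _ = (List.zipWith ED (List.ofFn X) Y).sum := h2.symm
        _ ≤ ED x y := hsum
    exact_mod_cast this
  -- ∑ d ≤ c * ED x y
  have hd_le : (∑ i : Fin T, d i) ≤ c * (ED x y : ℝ) := by
    calc (∑ i : Fin T, d i)
        ≤ ∑ i : Fin T, c * ((sInf {k : ℕ | ∃ w : List α, w <:+: y ∧ k = ED (X i) w} : ℕ) : ℝ) :=
          Finset.sum_le_sum fun i _ => hhigh i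
      _ = c * ∑ i : Fin T, ((sInf {k : ℕ | ∃ w : List α, w <:+: y ∧ k = ED (X i) w} : ℕ) : ℝ) := by
          rw [Finset.mul_sum]
      _ ≤ c * (ED x y : ℝ) := by
          apply mul_le_mul_of_nonneg_left hsinf (by linarith)
  have htri1 : (ED x y : ℝ) ≤ (ED x yt : ℝ) + (ED yt y : ℝ) := by
    exact_mod_cast EDaux.ED_triangle x yt y
  have hsymm : ED yt y = ED y yt := EDaux.ED_symm yt y
  have htri2 : (ED y yt : ℝ) ≤ (ED y x : ℝ) + (ED x yt : ℝ) := by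
    exact_mod_cast EDaux.ED_triangle y x yt
  have hsymm2 : ED y x = ED x y := EDaux.ED_symm y x
  constructor
  · rw [hsymm] at htri1
    linarith
  · rw [hsymm2] at htri2
    nlinarith [hxyt_d, hd_le, htri2]
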